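/- arXiv:1711.07255 — 2 statements merged into one kernel-verified Lean document; each statement's English description precedes it below -/
import Mathlib

section
/- There is no neighborhood U of P₀ in the symplectic group Sp(ℝ⁴) such that every S ∈ U with det(S − I₄) > 0 and tr(S) < 4 is elliptic. Equivalently: for every δ > 0 there exists a symplectic matrix S with ‖S − P₀‖ < δ, det(S − I₄) > 0, tr(S) < 4, and S not elliptic. -/
open Matrix

/-- The standard 4×4 symplectic matrix `J = [[0, I₂],[-I₂, 0]]`. -/
noncomputable def Jmat : Matrix (Fin 4) (Fin 4) ℝ :=
  !![0, 0, 1, 0;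
     0, 0, 0, 1;
     -1, 0, 0, 0;
     0, -1, 0, 0]

/-- `A_ε = [[1, -ε],[ε, 1]]`. -/
noncomputable def Aeps (ε : ℝ) : Matrix (Fin 2) (Fin 2) ℝ := !![1, -ε; ε, 1]

/-- `B_ε = [[1, -ε],[0, 0]]`. -/
noncomputable def Beps (ε : ℝ) : Matrix (Fin 2) (Fin 2) ℝ := !![1, -ε; 0, 0]

/-- `C_ε = (1/(1+ε²))·[[1, -ε],[ε, 1]]`. -/
noncomputable def Ceps (ε : ℝ) : Matrix (Fin 2) (Fin 2) ℝ :=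
  !![1 / (1 + ε ^ 2), -ε / (1 + ε ^ 2); ε / (1 + ε ^ 2), 1 / (1 + ε ^ 2)]

/-- `P_ε = [[A_ε, B_ε],[0, C_ε]]` written out as a 4×4 matrix. -/
noncomputable def Peps (ε : ℝ) : Matrix (Fin 4) (Fin 4) ℝ :=
  !![1, -ε, 1, -ε;
     ε, 1, 0, 0;
     0, 0, 1 / (1 + ε ^ 2), -ε / (1 + ε ^ 2);
     0, 0, ε / (1 + ε ^ 2), 1 / (1 + ε ^ 2)]

attribute [local instance] Matrix.normedAddCommGroup

lemma hpos (ε : ℝ) : (0:ℝ) < 1 + ε ^ 2 := by positivity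

set_option maxHeartbeats 2000000 in
lemma pepsT (ε : ℝ) : (Peps ε)ᵀ =
    !![1, ε, 0, 0;
       -ε, 1, 0, 0;
       1, 0, 1 / (1 + ε ^ 2), ε / (1 + ε ^ 2);
       -ε, 0, -ε / (1 + ε ^ 2), 1 / (1 + ε ^ 2)] := by
  ext i j
  fin_cases i <;> fin_cases j <;>
    simp [Peps, Matrix.transpose_apply, Matrix.vecHead, Matrix.vecTail]

set_option maxHeartbeats 2000000 in
lemma symp (ε : ℝ) : (Peps ε)ᵀ * Jmat * Peps ε = Jmat := by
  have h := (hpos ε).ne'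
  ext i j
  fin_cases i <;> fin_cases j <;>
    · simp [Jmat, Peps, pepsT, Matrix.mul_apply, Fin.sum_univ_four, Matrix.vecHead,
        Matrix.vecTail]
      try { field_simp; try ring }

set_option maxHeartbeats 2000000 in
lemma detlem (ε : ℝ) : (Peps ε - 1).det = ε^4 / (1 + ε^2) := by
  have h : (1:ℝ) + ε ^ 2 ≠ 0 := (hpos ε).ne'
  have : Peps ε - 1 = !![0, -ε, 1, -ε;
     ε, 0, 0, 0;
     0, 0, 1 / (1 + ε ^ 2) - 1, -ε / (1 + ε ^ 2);
     0, 0, ε / (1 + ε ^ 2), 1 / (1 + ε ^ 2) - 1] := by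
    ext i j
    fin_cases i <;> fin_cases j <;>
      simp [Peps, Matrix.one_apply, Matrix.vecHead, Matrix.vecTail]
  rw [this, Matrix.det_succ_row_zero]
  simp [Fin.sum_univ_succ, Matrix.det_fin_three, Matrix.submatrix_apply, Fin.succAbove,
    Matrix.vecHead, Matrix.vecTail]
  field_simp
  ring

lemma trlem (ε : ℝ) : (Peps ε).trace = 2 + 2 / (1 + ε^2) := by
  simp [Peps, Matrix.trace, Matrix.diag, Fin.sum_univ_four, Matrix.vecHead, Matrix.vecTail]
  ring

set_option maxHeartbeats 2000000 in
lemma speclem (ε : ℝ) :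
    ((1 : ℂ) + ε * Complex.I) ∈ spectrum ℂ ((Peps ε).map (algebraMap ℝ ℂ)) := by
  rw [spectrum.mem_iff]
  intro hu
  rw [Matrix.isUnit_iff_isUnit_det, isUnit_iff_ne_zero] at hu
  apply hu
  have h : ((1:ℂ) + (ε:ℂ) ^ 2) ≠ 0 := by
    have h0 := (hpos ε).ne'
    have : ((1 + ε^2 : ℝ) : ℂ) ≠ 0 := Complex.ofReal_ne_zero.mpr h0
    push_cast at this
    exact this
  have key : algebraMap ℂ (Matrix (Fin 4) (Fin 4) ℂ) (1 + ε * Complex.I) -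
      (Peps ε).map (algebraMap ℝ ℂ) =
      !![ε * Complex.I, ε, -1, ε;
         -ε, ε * Complex.I, 0, 0;
         0, 0, 1 + ε * Complex.I - 1 / (1 + (ε:ℂ) ^ 2), ε / (1 + (ε:ℂ) ^ 2);
         0, 0, -ε / (1 + (ε:ℂ) ^ 2), 1 + ε * Complex.I - 1 / (1 + (ε:ℂ) ^ 2)] := by
    ext i j
    fin_cases i <;> fin_cases j <;>
      simp [-map_add, -_root_.map_mul, Peps, Matrix.algebraMap_matrix_apply,
          Matrix.map_apply, Matrix.vecHead, Matrix.vecTail] <;>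
        (push_cast; ring)
  rw [key, Matrix.det_succ_row_zero]
  simp [Fin.sum_univ_succ, Matrix.det_fin_three, Matrix.submatrix_apply, Fin.succAbove,
    Matrix.vecHead, Matrix.vecTail]
  field_simp
  ring_nf
  simp only [show Complex.I ^ 4 = 1 by rw [show (4:ℕ) = 2*2 from rfl, pow_mul, Complex.I_sq]; ring,
    show Complex.I ^ 3 = -Complex.I by rw [pow_succ, Complex.I_sq]; ring,
    show Complex.I ^ 2 = -1 from Complex.I_sq]
  ring

set_option maxHeartbeats 2000000 in
/-- For every `δ > 0` there is a symplectic matrix `S` with `‖S − P₀‖ < δ`,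
`det(S − I₄) > 0`, `tr S < 4`, and `S` not elliptic.  Hence no neighborhood `U` of
`P₀` in `Sp(ℝ⁴)` is such that conditions (2) imply ellipticity on `U`. -/
theorem stmt10 (δ : ℝ) (hδ : 0 < δ) :
    ∃ S : Matrix (Fin 4) (Fin 4) ℝ,
      Sᵀ * Jmat * S = Jmat ∧
      ‖S - Peps 0‖ < δ ∧
      0 < (S - 1).det ∧
      S.trace < 4 ∧
      ¬ (∀ lam ∈ spectrum ℂ (S.map (algebraMap ℝ ℂ)),
          ‖lam‖ = 1 ∧ lam ≠ 1 ∧ lam ≠ -1) := by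
  obtain ⟨ε, hε0, hεδ, hε1⟩ : ∃ ε : ℝ, 0 < ε ∧ ε < δ ∧ ε ≤ 1 := by
    refine ⟨min δ 1 / 2, by positivity, ?_, ?_⟩
    · have : min δ 1 ≤ δ := min_le_left _ _
      linarith [lt_min hδ one_pos]
    · have : min δ 1 ≤ 1 := min_le_right _ _
      linarith
  refine ⟨Peps ε, symp ε, ?_, ?_, ?_, ?_⟩
  · have h1 := hpos ε
    have hi0 : 0 < (1 + ε ^ 2)⁻¹ := by positivity
    have hii : (1 + ε ^ 2)⁻¹ * (1 + ε ^ 2) = 1 := inv_mul_cancel₀ h1.ne'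
    have hi0' := mul_nonneg hi0.le (sq_nonneg ε)
    have hi1 : (1 + ε ^ 2)⁻¹ ≤ 1 := by nlinarith
    have hb : ‖Peps ε - Peps 0‖ ≤ ε := by
      rw [Matrix.norm_le_iff hε0.le]
      intro i j
      fin_cases i <;> fin_cases j <;>
        simp [Peps, Matrix.vecHead, Matrix.vecTail, Real.norm_eq_abs, abs_le,
          abs_of_pos hε0, abs_of_pos h1, div_le_iff₀ h1] <;>
          (try constructor) <;> nlinarith [sq_nonneg ε, hii, hi0, hi1, hi0']
    exact lt_of_le_of_lt hb hεδ
  · rw [detlem]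
    positivity
  · rw [trlem]
    have : 2 / (1 + ε ^ 2) < 2 := by
      rw [div_lt_iff₀ (hpos ε)]
      nlinarith
    linarith
  · intro hall
    have hmem := speclem ε
    have habs := (hall _ hmem).1
    have h2 : ‖(1 + ε * Complex.I)‖ ^ 2 = 1 := by rw [habs]; norm_num
    rw [Complex.sq_norm] at h2
    have h3 : Complex.normSq (1 + ε * Complex.I) = 1 + ε ^ 2 := by
      have := Complex.normSq_add_mul_I 1 ε
      push_cast at this ⊢
      simpa using this
    rw [h3] at h2
    nlinarith
end

section
/- The matrix P₀ admits no invariant Lagrangian splitting: there do not exist two-dimensional subspaces U₀, V₀ of ℝ⁴ with ℝ⁴ = U₀ ⊕ V₀, both U₀ and V₀ Lagrangian with respect to ω(u,w) = uᵀ J w, and both invariant under P₀. -/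
open Matrix

/-- `P₀` admits no invariant Lagrangian splitting of `ℝ⁴`. -/
theorem stmt14 :
    ¬ ∃ U V : Submodule ℝ (Fin 4 → ℝ),
        Module.finrank ℝ U = 2 ∧ Module.finrank ℝ V = 2 ∧
        IsCompl U V ∧
        (∀ u₁ ∈ U, ∀ u₂ ∈ U, u₁ ⬝ᵥ Jmat.mulVec u₂ = 0) ∧
        (∀ w₁ ∈ V, ∀ w₂ ∈ V, w₁ ⬝ᵥ Jmat.mulVec w₂ = 0) ∧
        (∀ u ∈ U, (Peps 0).mulVec u ∈ U) ∧
        (∀ w ∈ V, (Peps 0).mulVec w ∈ V) := by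
  rintro ⟨U, V, -, -, hcompl, hU, hV, hPU, hPV⟩
  have key : ∀ (W : Submodule ℝ (Fin 4 → ℝ)),
      (∀ u₁ ∈ W, ∀ u₂ ∈ W, u₁ ⬝ᵥ Jmat.mulVec u₂ = 0) →
      (∀ u ∈ W, (Peps 0).mulVec u ∈ W) →
      ∀ w ∈ W, w 2 = 0 := by
    intro W hL hI w hw
    have hd : (Peps 0).mulVec w - w ∈ W := W.sub_mem (hI w hw) hw
    have h0 := hL _ hd w hw
    have hcalc : ((Peps 0).mulVec w - w) ⬝ᵥ Jmat.mulVec w = w 2 * w 2 := by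
      simp [Peps, Jmat, mulVec, dotProduct, Fin.sum_univ_four]
    nlinarith [h0, hcalc]
  have hU2 := key U hU hPU
  have hV2 := key V hV hPV
  have hmem : (fun i => if i = 2 then (1:ℝ) else 0) ∈ U ⊔ V := by
    rw [hcompl.sup_eq_top]; trivial
  obtain ⟨u, hu, v, hv, huv⟩ := Submodule.mem_sup.mp hmem
  have hc := congrFun huv 2
  simp [hU2 u hu, hV2 v hv] at hc
end
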